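/- Let n, ℓ, δ be positive integers with 2δ < ℓ ≤ n/2, ℓ ∣ n and b = n/ℓ ≥ 2, and let C ⊆ 𝔽₂ⁿ be a code that detects up to δ deletions per block. Then for every codeword x ∈ C and every j ∈ {1,…,b−1}, exactly one of the following holds: (i) the last δ bits of block j are all 1 and the first δ bits of block j+1 are all 0, i.e., x_{[jℓ−δ+1, jℓ]} = 1^δ and x_{[jℓ+1, jℓ+δ]} = 0^δ; or (ii) x_{[jℓ−δ+1, jℓ]} = 0^δ and x_{[jℓ+1, jℓ+δ]} = 1^δ. -/

import Mathlib

/-- The `i`-th bit (0-indexed) of `x ∈ 𝔽₂ⁿ`, with default `false` out of range. -/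
def bitAt (n : ℕ) (x : Fin n → Bool) (i : ℕ) : Bool :=
  if h : i < n then x ⟨i, h⟩ else false

/-- The `j`-th block (1-indexed, of length `ℓ`) of `x ∈ 𝔽₂ⁿ`, as a list. -/
def blockList (n ℓ : ℕ) (x : Fin n → Bool) (j : ℕ) : List Bool :=
  (List.range ℓ).map (fun i => bitAt n x ((j - 1) * ℓ + i))

/-- `y` is a `δ`-per-block deletion output of `x` with deletion pattern `d`:
`y = ⟨y¹,…,y^b⟩` where each `y^j` is a subsequence of block `j` of `x`
of length `ℓ - d j`, with `d j ≤ δ`. -/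
def IsDelOutput (n ℓ δ : ℕ) (x : Fin n → Bool) (d : ℕ → ℕ) (y : List Bool) : Prop :=
  ∃ ys : ℕ → List Bool,
    (∀ j ∈ Finset.Icc 1 (n / ℓ),
      (ys j).Sublist (blockList n ℓ x j) ∧ d j ≤ δ ∧ (ys j).length = ℓ - d j) ∧
    y = ((List.range (n / ℓ)).map (fun j => ys (j + 1))).flatten

/-- `C ⊆ 𝔽₂ⁿ` detects up to `δ` deletions per block. -/
def Detects (n ℓ δ : ℕ) (C : Set (Fin n → Bool)) : Prop :=
  ∀ x ∈ C, ∀ x' ∈ C, ∀ d d' : ℕ → ℕ, ∀ y : List Bool,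
    IsDelOutput n ℓ δ x d y → IsDelOutput n ℓ δ x' d' y →
    ∀ j ∈ Finset.Icc 1 (n / ℓ), d j = d' j

/-- The 0-indexed starting position `α_j - 1` of block `j` in the output,
given the deletion pattern `d`. -/
def startIdx (ℓ : ℕ) (d : ℕ → ℕ) (j : ℕ) : ℕ :=
  ∑ m ∈ Finset.Icc 1 (j - 1), (ℓ - d m)

/-- The window `(y_{α_j},…,y_{α_j+ℓ-1})` of length `ℓ` of the list `y`
starting at 0-indexed position `s = α_j - 1`. -/
def window (ℓ : ℕ) (y : List Bool) (s : ℕ) : Fin ℓ → Bool :=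
  fun i => y.getD (s + i) false

/-- `C` is block-by-block decodable. -/
def BlockDecodable (n ℓ δ : ℕ) (C : Set (Fin n → Bool)) : Prop :=
  ∃ f : ℕ → (Fin ℓ → Bool) → ℕ,
    (∀ j w, f j w ≤ δ) ∧
    ∀ x ∈ C, ∀ d : ℕ → ℕ, ∀ y : List Bool, IsDelOutput n ℓ δ x d y →
      ∀ j ∈ Finset.Icc 1 (n / ℓ - 1),
        f j (window ℓ y (startIdx ℓ d j)) = d j

lemma flatten_congr_two (f g : ℕ → List Bool) (b t : ℕ) (ht : t + 2 ≤ b)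
    (hfg : ∀ k, k ≠ t → k ≠ t + 1 → f k = g k)
    (hmid : f t ++ f (t + 1) = g t ++ g (t + 1)) :
    ((List.range b).map f).flatten = ((List.range b).map g).flatten := by
  obtain ⟨r, rfl⟩ : ∃ r, b = t + 2 + r := ⟨b - (t + 2), by omega⟩
  rw [List.range_add, show t + 2 = (t + 1) + 1 from rfl, List.range_succ, List.range_succ]
  simp only [List.map_append, List.flatten_append, List.append_assoc, List.map_cons,
    List.map_nil, List.flatten_cons, List.flatten_nil, List.append_nil]
  have h1 : (List.range t).map f = (List.range t).map g :=
    List.map_congr_left (fun k hk => hfg k (by simp at hk; omega) (by simp at hk; omega))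
  have h2 : (List.range r).map (fun k => f (t + 1 + 1 + k)) =
      (List.range r).map (fun k => g (t + 1 + 1 + k)) :=
    List.map_congr_left (fun k _ => hfg _ (by omega) (by omega))
  rw [h1, List.map_map, List.map_map]
  have h2' : List.map (f ∘ fun x => t + 1 + 1 + x) (List.range r) =
      List.map (g ∘ fun x => t + 1 + 1 + x) (List.range r) := by
    simpa [Function.comp] using h2
  rw [h2']
  congr 1
  rw [← List.append_assoc, ← List.append_assoc, hmid]

lemma blockList_length (n ℓ : ℕ) (x : Fin n → Bool) (j : ℕ) :
    (blockList n ℓ x j).length = ℓ := by simp [blockList]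

lemma blockList_getElem (n ℓ : ℕ) (x : Fin n → Bool) (j i : ℕ) (h : i < ℓ) :
    (blockList n ℓ x j)[i]'(by rw [blockList_length]; exact h)
      = bitAt n x ((j - 1) * ℓ + i) := by
  simp [blockList]

lemma take_append_singleton_sublist (l : List Bool) (m i : ℕ) (him : m ≤ i)
    (hi : i < l.length) : (l.take m ++ [l[i]]).Sublist l := by
  have h2 : l[i] ∈ l.drop m := by
    have hlt : i - m < (l.drop m).length := by rw [List.length_drop]; omega
    have : (l.drop m)[i - m]'hlt = l[i] := by
      rw [List.getElem_drop]; congr 1; omega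
    rw [← this]; exact List.getElem_mem hlt
  have := List.Sublist.append (List.Sublist.refl (l.take m))
    (List.singleton_sublist.mpr h2)
  rwa [List.take_append_drop] at this

lemma cons_drop_sublist (l : List Bool) (m i : ℕ) (him : i < m) (hi : i < l.length) :
    (l[i] :: l.drop m).Sublist l := by
  have h2 : l[i] ∈ l.take m := by
    have hlt : i < (l.take m).length := by rw [List.length_take]; omega
    have : (l.take m)[i]'hlt = l[i] := List.getElem_take
    rw [← this]; exact List.getElem_mem hlt
  have := List.Sublist.append (List.singleton_sublist.mpr h2)
    (List.Sublist.refl (l.drop m))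
  rwa [List.take_append_drop] at this

/-- Update a function at two consecutive points `j`, `j+1`. -/
def upd2 {α : Type*} (f : ℕ → α) (j : ℕ) (a b : α) : ℕ → α :=
  fun m => if m = j then a else if m = j + 1 then b else f m

@[simp] lemma upd2_eq1 {α : Type*} (f : ℕ → α) (j : ℕ) (a b : α) :
    upd2 f j a b j = a := if_pos rfl

@[simp] lemma upd2_eq2 {α : Type*} (f : ℕ → α) (j : ℕ) (a b : α) :
    upd2 f j a b (j + 1) = b := by
  unfold upd2; rw [if_neg (by omega), if_pos rfl]

lemma upd2_ne {α : Type*} (f : ℕ → α) (j : ℕ) (a b : α) (m : ℕ)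
    (h1 : m ≠ j) (h2 : m ≠ j + 1) : upd2 f j a b m = f m := by
  unfold upd2; rw [if_neg h1, if_neg h2]

lemma keyA (n ℓ δ : ℕ) (hδ : 0 < δ) (hδℓ : δ < ℓ)
    (C : Set (Fin n → Bool)) (hC : Detects n ℓ δ C)
    (x : Fin n → Bool) (hx : x ∈ C)
    (t : ℕ) (ht : t + 2 ≤ n / ℓ) (r : ℕ) (hr1 : ℓ - δ ≤ r) (hr2 : r < ℓ)
    (hbit : bitAt n x (t * ℓ + r) = bitAt n x ((t + 1) * ℓ)) : False := by
  have hlen : ∀ m, (blockList n ℓ x m).length = ℓ := blockList_length n ℓ x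
  set L1 := blockList n ℓ x (t + 1) with hL1
  set L2 := blockList n ℓ x (t + 2) with hL2
  have hlen1 : L1.length = ℓ := hlen _
  have hlen2 : L2.length = ℓ := hlen _
  set b1 := bitAt n x ((t + 1) * ℓ) with hb1
  have hb1B : L1[r]'(by omega) = b1 :=
    (blockList_getElem n ℓ x (t + 1) r hr2).trans (by simpa using hbit)
  have hb1B2 : L2[0]'(by omega) = b1 :=
    (blockList_getElem n ℓ x (t + 2) 0 (by omega)).trans (by simp [hb1])
  have hhead : L2 = b1 :: L2.drop 1 := by
    have h0 : (0 : ℕ) < L2.length := by omega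
    have h := List.drop_eq_getElem_cons h0
    rw [List.drop_zero, hb1B2] at h
    exact h
  have hsub' : (L1.take (ℓ - δ) ++ [b1]).Sublist L1 := by
    rw [← hb1B]
    exact take_append_singleton_sublist _ (ℓ - δ) r hr1 (by omega)
  -- the two descriptions
  set ys := upd2 (blockList n ℓ x) (t + 1) (L1.take (ℓ - δ)) L2 with hys
  set ys' := upd2 (blockList n ℓ x) (t + 1) (L1.take (ℓ - δ) ++ [b1]) (L2.drop 1) with hys'
  set d := upd2 (fun _ => 0) (t + 1) δ 0 with hd
  set d' := upd2 (fun _ => 0) (t + 1) (δ - 1) 1 with hd'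
  set y := ((List.range (n / ℓ)).map (fun k => ys (k + 1))).flatten with hy
  have hdel : IsDelOutput n ℓ δ x d y := by
    refine ⟨ys, fun m hm => ?_, rfl⟩
    rcases eq_or_ne m (t + 1) with hmt | hmt
    · subst hmt
      rw [hys, hd, upd2_eq1, upd2_eq1, ← hL1]
      exact ⟨List.take_sublist _ _, le_refl δ, by rw [List.length_take]; omega⟩
    · rcases eq_or_ne m (t + 2) with hmt2 | hmt2
      · subst hmt2
        rw [hys, hd, show t + 2 = (t + 1) + 1 from rfl, upd2_eq2, upd2_eq2, ← hL2]
        exact ⟨List.Sublist.refl _, by omega, by omega⟩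
      · rw [hys, hd, upd2_ne _ _ _ _ _ hmt (by omega), upd2_ne _ _ _ _ _ hmt (by omega)]
        exact ⟨List.Sublist.refl _, by omega, by rw [hlen]; omega⟩
  have hyy' : y = ((List.range (n / ℓ)).map (fun k => ys' (k + 1))).flatten := by
    rw [hy]
    apply flatten_congr_two _ _ (n / ℓ) t ht
    · intro k hk1 hk2
      rw [hys, hys', upd2_ne _ _ _ _ _ (by omega) (by omega),
        upd2_ne _ _ _ _ _ (by omega) (by omega)]
    · show ys (t + 1) ++ ys (t + 1 + 1) = ys' (t + 1) ++ ys' (t + 1 + 1)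
      rw [hys, hys', upd2_eq1, upd2_eq1, upd2_eq2, upd2_eq2]
      rw [List.append_assoc, List.singleton_append, ← hhead]
  have hdel' : IsDelOutput n ℓ δ x d' y := by
    refine ⟨ys', fun m hm => ?_, hyy'⟩
    rcases eq_or_ne m (t + 1) with hmt | hmt
    · subst hmt
      rw [hys', hd', upd2_eq1, upd2_eq1, ← hL1]
      refine ⟨hsub', by omega, ?_⟩
      rw [List.length_append, List.length_take, List.length_singleton]
      omega
    · rcases eq_or_ne m (t + 2) with hmt2 | hmt2
      · subst hmt2
        rw [hys', hd', show t + 2 = (t + 1) + 1 from rfl, upd2_eq2, upd2_eq2, ← hL2]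
        exact ⟨List.drop_sublist _ _, by omega, by rw [List.length_drop]; omega⟩
      · rw [hys', hd', upd2_ne _ _ _ _ _ hmt (by omega), upd2_ne _ _ _ _ _ hmt (by omega)]
        exact ⟨List.Sublist.refl _, by omega, by rw [hlen]; omega⟩
  have hfin := hC x hx x hx d d' y hdel hdel' (t + 1)
    (Finset.mem_Icc.mpr ⟨by omega, by omega⟩)
  rw [hd, hd', upd2_eq1, upd2_eq1] at hfin
  omega

lemma keyB (n ℓ δ : ℕ) (hδ : 0 < δ) (hδℓ : δ < ℓ)
    (C : Set (Fin n → Bool)) (hC : Detects n ℓ δ C)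
    (x : Fin n → Bool) (hx : x ∈ C)
    (t : ℕ) (ht : t + 2 ≤ n / ℓ) (s : ℕ) (hs : s < δ)
    (hbit : bitAt n x ((t + 1) * ℓ + s) = bitAt n x (t * ℓ + (ℓ - 1))) : False := by
  have hlen : ∀ m, (blockList n ℓ x m).length = ℓ := blockList_length n ℓ x
  set L1 := blockList n ℓ x (t + 1) with hL1
  set L2 := blockList n ℓ x (t + 2) with hL2
  have hlen1 : L1.length = ℓ := hlen _
  have hlen2 : L2.length = ℓ := hlen _
  set aδ := bitAt n x (t * ℓ + (ℓ - 1)) with haδ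
  have haB : L2[s]'(by omega) = aδ :=
    (blockList_getElem n ℓ x (t + 2) s (by omega)).trans (by simpa using hbit)
  have haB1 : L1[ℓ - 1]'(by omega) = aδ :=
    (blockList_getElem n ℓ x (t + 1) (ℓ - 1) (by omega)).trans (by simp [haδ])
  have hlast : L1 = L1.take (ℓ - 1) ++ [aδ] := by
    have h0 : ℓ - 1 < L1.length := by omega
    have h := List.drop_eq_getElem_cons h0
    rw [haB1, show ℓ - 1 + 1 = ℓ by omega,
      List.drop_eq_nil_of_le (le_of_eq hlen1)] at h
    rw [← h, List.take_append_drop]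
  have hsub' : (aδ :: L2.drop δ).Sublist L2 := by
    rw [← haB]
    exact cons_drop_sublist L2 δ s hs (by omega)
  set ys := upd2 (blockList n ℓ x) (t + 1) L1 (L2.drop δ) with hys
  set ys' := upd2 (blockList n ℓ x) (t + 1) (L1.take (ℓ - 1)) (aδ :: L2.drop δ) with hys'
  set d := upd2 (fun _ => 0) (t + 1) 0 δ with hd
  set d' := upd2 (fun _ => 0) (t + 1) 1 (δ - 1) with hd'
  set y := ((List.range (n / ℓ)).map (fun k => ys (k + 1))).flatten with hy
  have hdel : IsDelOutput n ℓ δ x d y := by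
    refine ⟨ys, fun m hm => ?_, rfl⟩
    rcases eq_or_ne m (t + 1) with hmt | hmt
    · subst hmt
      rw [hys, hd, upd2_eq1, upd2_eq1]
      exact ⟨by rw [hL1], by omega, by omega⟩
    · rcases eq_or_ne m (t + 2) with hmt2 | hmt2
      · subst hmt2
        rw [hys, hd, show t + 2 = (t + 1) + 1 from rfl, upd2_eq2, upd2_eq2, ← hL2]
        exact ⟨List.drop_sublist _ _, le_refl δ, by rw [List.length_drop]; omega⟩
      · rw [hys, hd, upd2_ne _ _ _ _ _ hmt (by omega), upd2_ne _ _ _ _ _ hmt (by omega)]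
        exact ⟨List.Sublist.refl _, by omega, by rw [hlen]; omega⟩
  have hyy' : y = ((List.range (n / ℓ)).map (fun k => ys' (k + 1))).flatten := by
    rw [hy]
    apply flatten_congr_two _ _ (n / ℓ) t ht
    · intro k hk1 hk2
      rw [hys, hys', upd2_ne _ _ _ _ _ (by omega) (by omega),
        upd2_ne _ _ _ _ _ (by omega) (by omega)]
    · show ys (t + 1) ++ ys (t + 1 + 1) = ys' (t + 1) ++ ys' (t + 1 + 1)
      rw [hys, hys', upd2_eq1, upd2_eq1, upd2_eq2, upd2_eq2]
      conv_lhs => rw [hlast]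
      rw [List.append_assoc, List.singleton_append]
  have hdel' : IsDelOutput n ℓ δ x d' y := by
    refine ⟨ys', fun m hm => ?_, hyy'⟩
    rcases eq_or_ne m (t + 1) with hmt | hmt
    · subst hmt
      rw [hys', hd', upd2_eq1, upd2_eq1]
      refine ⟨by rw [hL1]; exact List.take_sublist _ _, by omega, ?_⟩
      rw [List.length_take]; omega
    · rcases eq_or_ne m (t + 2) with hmt2 | hmt2
      · subst hmt2
        rw [hys', hd', show t + 2 = (t + 1) + 1 from rfl, upd2_eq2, upd2_eq2, ← hL2]
        exact ⟨hsub', by omega, by rw [List.length_cons, List.length_drop]; omega⟩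
      · rw [hys', hd', upd2_ne _ _ _ _ _ hmt (by omega), upd2_ne _ _ _ _ _ hmt (by omega)]
        exact ⟨List.Sublist.refl _, by omega, by rw [hlen]; omega⟩
  have hfin := hC x hx x hx d d' y hdel hdel' (t + 1)
    (Finset.mem_Icc.mpr ⟨by omega, by omega⟩)
  rw [hd, hd', upd2_eq1, upd2_eq1] at hfin
  omega
/-- In any code detecting up to d deletions per block, at every block
boundary j, exactly one of the two marker patterns occurs:
(i) last d bits of block j all 1 and first d bits of block j+1 all 0, or
(ii) last d bits of block j all 0 and first d bits of block j+1 all 1. -/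
theorem boundary_marker_dichotomy
    (n ℓ δ : ℕ) (hδ : 0 < δ) (hℓ : 2 * δ < ℓ) (hℓn : ℓ ≤ n / 2) (hdvd : ℓ ∣ n)
    (hb : 2 ≤ n / ℓ)
    (C : Set (Fin n → Bool)) (hC : Detects n ℓ δ C)
    (x : Fin n → Bool) (hx : x ∈ C) :
    ∀ j ∈ Finset.Icc 1 (n / ℓ - 1),
      Xor'
        ((∀ i ∈ Finset.Icc (j * ℓ - δ + 1) (j * ℓ), bitAt n x (i - 1) = true) ∧
          (∀ i ∈ Finset.Icc (j * ℓ + 1) (j * ℓ + δ), bitAt n x (i - 1) = false))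
        ((∀ i ∈ Finset.Icc (j * ℓ - δ + 1) (j * ℓ), bitAt n x (i - 1) = false) ∧
          (∀ i ∈ Finset.Icc (j * ℓ + 1) (j * ℓ + δ), bitAt n x (i - 1) = true)) := by
  intro j hj
  rw [Finset.mem_Icc] at hj
  have hδℓ : δ < ℓ := by omega
  obtain ⟨t, rfl⟩ : ∃ t, j = t + 1 := ⟨j - 1, by omega⟩
  have ht : t + 2 ≤ n / ℓ := by omega
  have hmul : (t + 1) * ℓ = t * ℓ + ℓ := by ring
  set c := bitAt n x (t * ℓ + (ℓ - 1)) with hc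
  have hb1 : ∀ s, s < δ → bitAt n x ((t + 1) * ℓ + s) = !c := by
    intro s hs
    by_contra hcon
    apply keyB n ℓ δ hδ hδℓ C hC x hx t ht s hs
    rw [← hc]
    cases hv : bitAt n x ((t + 1) * ℓ + s) <;> cases hcv : c <;> simp_all
  have hfirst : bitAt n x ((t + 1) * ℓ) = !c := by
    have := hb1 0 hδ; simpa using this
  have ha : ∀ r, ℓ - δ ≤ r → r < ℓ → bitAt n x (t * ℓ + r) = c := by
    intro r h1 h2
    by_contra hcon
    apply keyA n ℓ δ hδ hδℓ C hC x hx t ht r h1 h2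
    rw [hfirst]
    cases hv : bitAt n x (t * ℓ + r) <;> cases hcv : c <;> simp_all
  have hA : ∀ i ∈ Finset.Icc ((t + 1) * ℓ - δ + 1) ((t + 1) * ℓ), bitAt n x (i - 1) = c := by
    intro i hi
    rw [Finset.mem_Icc] at hi
    have h1 : i - 1 = t * ℓ + (i - 1 - t * ℓ) := by omega
    rw [h1]
    exact ha _ (by omega) (by omega)
  have hB : ∀ i ∈ Finset.Icc ((t + 1) * ℓ + 1) ((t + 1) * ℓ + δ), bitAt n x (i - 1) = !c := by
    intro i hi
    rw [Finset.mem_Icc] at hi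
    have h1 : i - 1 = (t + 1) * ℓ + (i - 1 - (t + 1) * ℓ) := by omega
    rw [h1]
    exact hb1 _ (by omega)
  have hmem : (t + 1) * ℓ ∈ Finset.Icc ((t + 1) * ℓ - δ + 1) ((t + 1) * ℓ) :=
    Finset.mem_Icc.mpr ⟨by omega, le_refl _⟩
  cases hcv : c with
  | true =>
    refine Or.inl ⟨⟨fun i hi => by rw [hA i hi, hcv],
      fun i hi => by rw [hB i hi, hcv]; rfl⟩, ?_⟩
    rintro ⟨hq1, -⟩
    have h1 := hq1 _ hmem
    have h2 := hA _ hmem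
    rw [h1, hcv] at h2
    simp at h2
  | false =>
    refine Or.inr ⟨⟨fun i hi => by rw [hA i hi, hcv],
      fun i hi => by rw [hB i hi, hcv]; rfl⟩, ?_⟩
    rintro ⟨hq1, -⟩
    have h1 := hq1 _ hmem
    have h2 := hA _ hmem
    rw [h1, hcv] at h2
    simp at h2
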